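/- Let A be an associative algebra over a field of characteristic zero, U ∈ A nilpotent, and ∂ a derivation of A. Then exp(-U)·(∂ exp(U)) = D(-ad U)(∂U), where D(x) = (e^x-1)/x, i.e. exp(-U)·∂(exp U) = ∑_{n≥0} (-1)^n (ad U)^n(∂U)/(n+1)!. -/

import Mathlib

open Finset

private lemma key1' {M : Type*} [AddCommMonoid M] (N S : ℕ) (hS : 2 * N ≤ S + 2)
    (h : ℕ → ℕ → M) (hz : ∀ a b, N ≤ a ∨ N ≤ b → h a b = 0) :
    ∑ n ∈ range (S + 1), ∑ m ∈ range (n + 1), h m (n - m)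
      = ∑ a ∈ range N, ∑ b ∈ range N, h a b := by
  rw [Finset.sum_sigma', ← Finset.sum_product']
  rw [← Finset.sum_filter_of_ne
    (p := fun p : (_ : ℕ) × ℕ => p.2 < N ∧ p.1 - p.2 < N)
    (by
      rintro ⟨n, m⟩ hmem hne
      constructor
      · by_contra hc; exact hne (hz _ _ (Or.inl (le_of_not_gt hc)))
      · by_contra hc; exact hne (hz _ _ (Or.inr (le_of_not_gt hc))))]
  refine Finset.sum_nbij' (fun p => (p.2, p.1 - p.2)) (fun q => ⟨q.1 + q.2, q.1⟩) ?_ ?_ ?_ ?_ ?_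
  · rintro ⟨n, m⟩ hmem
    simp only [Finset.mem_filter, Finset.mem_sigma, Finset.mem_range] at hmem
    simp only [Finset.mem_product, Finset.mem_range]
    exact ⟨hmem.2.1, hmem.2.2⟩
  · rintro ⟨a, b⟩ hmem
    simp only [Finset.mem_product, Finset.mem_range] at hmem
    simp only [Finset.mem_filter, Finset.mem_sigma, Finset.mem_range]
    refine ⟨⟨by omega, by omega⟩, by omega, by omega⟩
  · rintro ⟨n, m⟩ hmem
    simp only [Finset.mem_filter, Finset.mem_sigma, Finset.mem_range] at hmem
    have : m + (n - m) = n := by omega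
    simp [this]
  · rintro ⟨a, b⟩ hmem
    simp
  · rintro ⟨n, m⟩ hmem
    rfl

private lemma key2' {M : Type*} [AddCommMonoid M] (N S : ℕ) (h1S : 1 ≤ S) (hS : 2 * N ≤ S + 1)
    (h : ℕ → ℕ → M) (hz : ∀ a b, N ≤ a ∨ N ≤ b → h a b = 0) :
    ∑ n ∈ range (S + 1), ∑ i ∈ range n, h i (n - 1 - i)
      = ∑ a ∈ range N, ∑ b ∈ range N, h a b := by
  obtain ⟨S', rfl⟩ : ∃ S', S = S' + 1 := ⟨S - 1, by omega⟩
  rw [Finset.sum_range_succ']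
  simp only [range_zero, sum_empty, add_zero]
  rw [Finset.sum_congr rfl (fun n hn => Finset.sum_congr rfl (fun i hi => by
      have h3 : n + 1 - 1 - i = n - i := by omega
      rw [h3]))]
  exact key1' N S' (by omega) h hz

private lemma coeff_id' : ∀ a b : ℕ,
    ∑ k ∈ range (a + 1),
        (-1 : ℚ) ^ k * ((k.factorial : ℚ)⁻¹ * ((a - k + b + 1).factorial : ℚ)⁻¹)
      = (-1 : ℚ) ^ a * ((a + b).choose a : ℚ) * ((a + b + 1).factorial : ℚ)⁻¹ := by
  intro a
  induction a with
  | zero => intro b; simp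
  | succ a ih =>
    intro b
    rw [Finset.sum_range_succ]
    rw [Finset.sum_congr rfl (fun k hk => by
      simp only [Finset.mem_range] at hk
      have h4 : a + 1 - k + b + 1 = a - k + (b + 1) + 1 := by omega
      rw [h4])]
    rw [ih (b + 1)]
    have e1 : a + (b + 1) = a + b + 1 := by omega
    have e2 : a + 1 - (a + 1) + b + 1 = b + 1 := by omega
    have e3 : a + 1 + b = a + b + 1 := by omega
    rw [e1, e2, e3]
    have hp : ((a + 1).factorial : ℚ) ≠ 0 := Nat.cast_ne_zero.mpr (Nat.factorial_ne_zero _)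
    have hq : ((b + 1).factorial : ℚ) ≠ 0 := Nat.cast_ne_zero.mpr (Nat.factorial_ne_zero _)
    have hr : ((a + b + 1 + 1).factorial : ℚ) ≠ 0 := Nat.cast_ne_zero.mpr (Nat.factorial_ne_zero _)
    have hpas : ((a + b + 1 + 1).choose (a + 1) : ℚ)
        = ((a + b + 1).choose a : ℚ) + ((a + b + 1).choose (a + 1) : ℚ) := by
      rw [← Nat.cast_add, ← Nat.choose_succ_succ]
    have hfac : ((a + b + 1 + 1).choose (a + 1) : ℚ) * ((a + 1).factorial : ℚ)
          * ((b + 1).factorial : ℚ) = ((a + b + 1 + 1).factorial : ℚ) := by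
      have h5 := Nat.choose_mul_factorial_mul_factorial
        (show a + 1 ≤ a + b + 1 + 1 by omega)
      have h6 : a + b + 1 + 1 - (a + 1) = b + 1 := by omega
      rw [h6] at h5
      exact_mod_cast congrArg (Nat.cast : ℕ → ℚ) h5
    have hpq : ((a + 1).factorial : ℚ)⁻¹ * ((b + 1).factorial : ℚ)⁻¹
        = ((a + b + 1 + 1).choose (a + 1) : ℚ) * ((a + b + 1 + 1).factorial : ℚ)⁻¹ := by
      rw [← hfac]
      have hc : ((a + b + 1 + 1).choose (a + 1) : ℚ) ≠ 0 :=
        Nat.cast_ne_zero.mpr (Nat.choose_pos (by omega)).ne'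
      field_simp
    rw [hpq, hpas, pow_succ]
    ring

private lemma ad_pow' {A : Type*} [Ring A] [Algebra ℚ A] (U x : A) (n : ℕ) :
    (fun a => U * a - a * U)^[n] x
      = ∑ m ∈ range (n + 1),
          ((-1 : ℚ) ^ (n - m) * ((n.choose m : ℕ) : ℚ)) • (U ^ m * x * U ^ (n - m)) := by
  set L : Module.End ℚ A := LinearMap.mulLeft ℚ U with hL
  set R : Module.End ℚ A := LinearMap.mulRight ℚ U with hR
  have hfun : (fun a => U * a - a * U) = ⇑(L - R) := by
    funext a; simp [hL, hR]
  have hc : Commute L (-R) := (show Commute L R from LinearMap.commute_mulLeft_right U U).neg_right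
  rw [hfun, ← Module.End.pow_apply, sub_eq_add_neg, hc.add_pow]
  rw [LinearMap.sum_apply]
  refine Finset.sum_congr rfl fun m hm => ?_
  have h1 : (-R) ^ (n - m) = ((-1 : ℚ) ^ (n - m)) • R ^ (n - m) := by
    have h2 : -R = ((-1 : ℚ)) • R := (neg_one_smul ℚ R).symm
    rw [h2, smul_pow]
  rw [h1]
  simp only [hL, hR, Module.End.mul_apply, LinearMap.pow_mulLeft, LinearMap.pow_mulRight,
    LinearMap.smul_apply, LinearMap.mulLeft_apply, LinearMap.mulRight_apply,
    Module.End.natCast_apply, LinearMap.map_smul]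
  rw [mul_smul, Nat.cast_smul_eq_nsmul, smul_mul_assoc, mul_smul_comm, mul_assoc]

private lemma D_pow' {A : Type*} [Ring A] [Algebra ℚ A] (U : A) (D : A →ₗ[ℚ] A)
    (hD : ∀ a b : A, D (a * b) = D a * b + a * D b) :
    ∀ n : ℕ, D (U ^ n) = ∑ i ∈ range n, U ^ i * D U * U ^ (n - 1 - i) := by
  intro n
  induction n with
  | zero =>
    have h := hD 1 1
    simp only [mul_one, one_mul] at h
    have h1 : D 1 = 0 := by
      have h2 : D (1 : A) + 0 = D 1 + D 1 := by rw [add_zero]; exact h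
      exact (add_left_cancel h2).symm
    simpa using h1
  | succ n ih =>
    rw [pow_succ']
    rw [hD, ih, Finset.mul_sum, Finset.sum_range_succ', add_comm (D U * U ^ n)]
    congr 1
    · refine Finset.sum_congr rfl fun i hi => ?_
      simp only [Finset.mem_range] at hi
      have h3 : n + 1 - 1 - (i + 1) = n - 1 - i := by omega
      rw [h3, ← mul_assoc, ← mul_assoc, ← pow_succ']
    · simp

/-- Let `A` be an associative algebra over a field of characteristic
zero (we work over `ℚ`), `U ∈ A` nilpotent (`U ^ N = 0`), and `∂` a derivation of `A`.
Then `exp(-U) · (∂ exp U) = D(-ad U)(∂U)` where `D(x) = (eˣ-1)/x`, i.e.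
`exp(-U) · ∂(exp U) = ∑_{n≥0} (-1)ⁿ (ad U)ⁿ(∂U)/(n+1)!` (finite sums by nilpotency). -/
theorem exp_neg_mul_deriv_exp
    {A : Type*} [Ring A] [Algebra ℚ A] (U : A) (N : ℕ) (hU : U ^ N = 0)
    (D : A →ₗ[ℚ] A) (hD : ∀ a b : A, D (a * b) = D a * b + a * D b) :
    (∑ n ∈ range (2 * N + 1), ((n.factorial : ℚ)⁻¹) • (-U) ^ n) *
      D (∑ n ∈ range (2 * N + 1), ((n.factorial : ℚ)⁻¹) • U ^ n) =
    ∑ n ∈ range (2 * N + 1),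
      (((-1 : ℚ) ^ n * ((n + 1).factorial : ℚ)⁻¹)) • (fun a => U * a - a * U)^[n] (D U) := by
  rcases Nat.eq_zero_or_pos N with hN0 | hNpos
  · subst hN0
    have h1 : (1 : A) = 0 := by simpa using hU
    have hall : ∀ a : A, a = 0 := fun a => by rw [← mul_one a, h1, mul_zero]
    rw [hall (_ * _), hall (∑ _ ∈ _, _)]
  have hUz : ∀ m, N ≤ m → U ^ m = 0 := by
    intro m hm
    rw [show m = N + (m - N) by omega, pow_add, hU, zero_mul]
  have hz2 : ∀ (c : ℚ) (p q : ℕ), N ≤ p ∨ N ≤ q → c • (U ^ p * D U * U ^ q) = 0 := by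
    intro c p q hpq
    rcases hpq with hpk | hpk
    · rw [hUz p hpk, zero_mul, zero_mul, smul_zero]
    · rw [hUz q hpk, mul_zero, smul_zero]
  set h : ℕ → ℕ → A := fun a b =>
    ((-1 : ℚ) ^ a * ((a + b).choose a : ℚ) * ((a + b + 1).factorial : ℚ)⁻¹)
      • (U ^ a * D U * U ^ b) with hh
  have hz : ∀ a b, N ≤ a ∨ N ≤ b → h a b = 0 := fun a b hab => hz2 _ a b hab
  -- RHS transformation
  have hRHS : ∑ n ∈ range (2 * N + 1),
      (((-1 : ℚ) ^ n * ((n + 1).factorial : ℚ)⁻¹)) • (fun a => U * a - a * U)^[n] (D U)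
      = ∑ a ∈ range N, ∑ b ∈ range N, h a b := by
    rw [← key1' N (2 * N) (by omega) h hz]
    refine Finset.sum_congr rfl fun n hn => ?_
    rw [ad_pow', Finset.smul_sum]
    refine Finset.sum_congr rfl fun m hm => ?_
    simp only [Finset.mem_range] at hm
    have hmn : m + (n - m) = n := by omega
    rw [smul_smul, hh]
    dsimp only
    rw [hmn]
    congr 1
    have hs : (-1 : ℚ) ^ n * (-1 : ℚ) ^ (n - m) = (-1 : ℚ) ^ m := by
      rw [← pow_add, show n + (n - m) = m + 2 * (n - m) by omega, pow_add, pow_mul]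
      norm_num
    calc (-1 : ℚ) ^ n * ((n + 1).factorial : ℚ)⁻¹ * ((-1 : ℚ) ^ (n - m) * ((n.choose m : ℕ) : ℚ))
        = ((-1 : ℚ) ^ n * (-1 : ℚ) ^ (n - m)) * ((n.choose m : ℕ) : ℚ)
            * ((n + 1).factorial : ℚ)⁻¹ := by ring
      _ = (-1 : ℚ) ^ m * ((n.choose m : ℕ) : ℚ) * ((n + 1).factorial : ℚ)⁻¹ := by rw [hs]
  rw [hRHS]
  -- LHS transformation
  have hL1 : (∑ n ∈ range (2 * N + 1), ((n.factorial : ℚ)⁻¹) • (-U) ^ n) *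
      D (∑ n ∈ range (2 * N + 1), ((n.factorial : ℚ)⁻¹) • U ^ n)
      = ∑ k ∈ range (2 * N + 1), ∑ n ∈ range (2 * N + 1), ∑ i ∈ range n,
          ((-1 : ℚ) ^ k * ((k.factorial : ℚ)⁻¹ * (n.factorial : ℚ)⁻¹))
            • (U ^ (k + i) * D U * U ^ (n - 1 - i)) := by
    rw [map_sum, Finset.sum_mul_sum]
    refine Finset.sum_congr rfl fun k hk => ?_
    refine Finset.sum_congr rfl fun n hn => ?_
    have hneg : (-U) ^ k = ((-1 : ℚ) ^ k) • U ^ k := by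
      rw [show -U = ((-1 : ℚ)) • U by rw [neg_smul, one_smul], smul_pow]
    rw [map_smul, D_pow' U D hD n, hneg, smul_smul, smul_mul_smul_comm, Finset.mul_sum,
      Finset.smul_sum]
    refine Finset.sum_congr rfl fun i hi => ?_
    congr 1
    · ring
    · rw [pow_add, mul_assoc (U ^ k), mul_assoc (U ^ k)]
  rw [hL1]
  -- collapse inner (n,i) double sums
  have hL2 : ∀ k, ∑ n ∈ range (2 * N + 1), ∑ i ∈ range n,
      ((-1 : ℚ) ^ k * ((k.factorial : ℚ)⁻¹ * (n.factorial : ℚ)⁻¹))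
        • (U ^ (k + i) * D U * U ^ (n - 1 - i))
      = ∑ a ∈ range N, ∑ b ∈ range N,
          ((-1 : ℚ) ^ k * ((k.factorial : ℚ)⁻¹ * ((a + b + 1).factorial : ℚ)⁻¹))
            • (U ^ (k + a) * D U * U ^ b) := by
    intro k
    rw [← key2' N (2 * N) (by omega) (by omega)
      (fun a b => ((-1 : ℚ) ^ k * ((k.factorial : ℚ)⁻¹ * ((a + b + 1).factorial : ℚ)⁻¹))
        • (U ^ (k + a) * D U * U ^ b))
      (fun a b hab => hab.elim (fun hN => hz2 _ (k + a) b (Or.inl (by omega)))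
        (fun hN => hz2 _ (k + a) b (Or.inr hN)))]
    refine Finset.sum_congr rfl fun n hn => Finset.sum_congr rfl fun i hi => ?_
    simp only [Finset.mem_range] at hi
    have h7 : i + (n - 1 - i) + 1 = n := by omega
    show _ = ((-1 : ℚ) ^ k * ((k.factorial : ℚ)⁻¹ * ((i + (n - 1 - i) + 1).factorial : ℚ)⁻¹))
      • (U ^ (k + i) * D U * U ^ (n - 1 - i))
    rw [h7]
  rw [Finset.sum_congr rfl fun k _ => hL2 k]
  -- reorder sums: k, a, b → b, k, a
  rw [Finset.sum_congr rfl fun k (_ : k ∈ range (2 * N + 1)) => Finset.sum_comm]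
  rw [Finset.sum_comm]
  -- now: ∑ b ∈ range N, ∑ k ∈ range (2N+1), ∑ a ∈ range N, ...
  have hL3 : ∀ b ∈ range N, ∑ k ∈ range (2 * N + 1), ∑ a ∈ range N,
      ((-1 : ℚ) ^ k * ((k.factorial : ℚ)⁻¹ * ((a + b + 1).factorial : ℚ)⁻¹))
        • (U ^ (k + a) * D U * U ^ b)
      = ∑ a ∈ range N, h a b := by
    intro b hb
    have hshrink : ∑ k ∈ range (2 * N + 1), ∑ a ∈ range N,
        ((-1 : ℚ) ^ k * ((k.factorial : ℚ)⁻¹ * ((a + b + 1).factorial : ℚ)⁻¹))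
          • (U ^ (k + a) * D U * U ^ b)
        = ∑ k ∈ range N, ∑ a ∈ range N,
        ((-1 : ℚ) ^ k * ((k.factorial : ℚ)⁻¹ * ((a + b + 1).factorial : ℚ)⁻¹))
          • (U ^ (k + a) * D U * U ^ b) := by
      refine (Finset.sum_subset (by intro t ht; simp only [Finset.mem_range] at ht ⊢; omega)
        ?_).symm
      intro k hk hk2
      simp only [Finset.mem_range] at hk hk2
      exact Finset.sum_eq_zero fun a ha => hz2 _ (k + a) b (Or.inl (by omega))
    rw [hshrink]
    rw [← key1' N (2 * N) (by omega)
      (fun k a => ((-1 : ℚ) ^ k * ((k.factorial : ℚ)⁻¹ * ((a + b + 1).factorial : ℚ)⁻¹))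
        • (U ^ (k + a) * D U * U ^ b))
      (fun p q hpq => hpq.elim (fun hN => hz2 _ (p + q) b (Or.inl (by omega)))
        (fun hN => hz2 _ (p + q) b (Or.inl (by omega))))]
    have hstep : ∀ n ∈ range (2 * N + 1),
        ∑ m ∈ range (n + 1),
          (fun k a => ((-1 : ℚ) ^ k * ((k.factorial : ℚ)⁻¹ * ((a + b + 1).factorial : ℚ)⁻¹))
            • (U ^ (k + a) * D U * U ^ b)) m (n - m)
        = (∑ m ∈ range (n + 1),
            (-1 : ℚ) ^ m * ((m.factorial : ℚ)⁻¹ * ((n - m + b + 1).factorial : ℚ)⁻¹))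
          • (U ^ n * D U * U ^ b) := by
      intro n hn
      rw [Finset.sum_smul]
      refine Finset.sum_congr rfl fun m hm => ?_
      simp only [Finset.mem_range] at hm
      show ((-1 : ℚ) ^ m * ((m.factorial : ℚ)⁻¹ * ((n - m + b + 1).factorial : ℚ)⁻¹))
          • (U ^ (m + (n - m)) * D U * U ^ b) = _
      rw [show m + (n - m) = n by omega]
    rw [Finset.sum_congr rfl hstep]
    have hshrink2 : range N ⊆ range (2 * N + 1) := by
      intro t ht; simp only [Finset.mem_range] at ht ⊢; omega
    rw [← Finset.sum_subset hshrink2 (fun n hn hn2 => by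
      simp only [Finset.mem_range] at hn hn2
      exact hz2 _ n b (Or.inl (by omega)))]
    refine Finset.sum_congr rfl fun n hn => ?_
    rw [coeff_id' n b]
  rw [Finset.sum_congr rfl hL3]
  exact Finset.sum_comm
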